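/- Let f : ℝⁿ → ℝⁿ be of class C², let M := {x ∈ ℝⁿ | f(x) = 0} be nonempty, and suppose there is an open neighborhood G ⊆ ℝⁿ of M and an integer s with 0 < s < n such that dim(ker Df_x) = s for every x ∈ G. Then M is a C^{2,1} manifold: for every p ∈ M there exist a set V ⊆ M that is open relative to M with p ∈ V and a constant L > 0 such that for all q ∈ V the Hausdorff distance between tangent spaces satisfies d_H(T_pM, T_qM) ≤ L‖p − q‖. -/

import Mathlib

open Set

set_option maxHeartbeats 1000000

/-- Key quantitative lemma: if two operators have kernels of equal (finite) dimension,
`A` is bounded below by `c` on `(ker A)ᗮ`, and `‖A - B‖ ≤ c/2`, then every unit vector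
of `ker A` is within `(4/c)‖A-B‖` of a unit vector of `ker B`. -/
private lemma key_lemma {n : ℕ}
    (A B : EuclideanSpace ℝ (Fin n) →L[ℝ] EuclideanSpace ℝ (Fin n))
    (hrk : Module.finrank ℝ (LinearMap.ker (B : EuclideanSpace ℝ (Fin n) →ₗ[ℝ] EuclideanSpace ℝ (Fin n))) = Module.finrank ℝ (LinearMap.ker (A : EuclideanSpace ℝ (Fin n) →ₗ[ℝ] EuclideanSpace ℝ (Fin n))))
    (c : ℝ) (hc : 0 < c)
    (hA : ∀ v ∈ (LinearMap.ker (A : EuclideanSpace ℝ (Fin n) →ₗ[ℝ] EuclideanSpace ℝ (Fin n)))ᗮ, c * ‖v‖ ≤ ‖A v‖)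
    (hδ : ‖A - B‖ ≤ c / 2)
    (t₁ : EuclideanSpace ℝ (Fin n)) (ht₁ : t₁ ∈ LinearMap.ker (A : EuclideanSpace ℝ (Fin n) →ₗ[ℝ] EuclideanSpace ℝ (Fin n))) (ht₁n : ‖t₁‖ = 1) :
    ∃ t₂ ∈ LinearMap.ker (B : EuclideanSpace ℝ (Fin n) →ₗ[ℝ] EuclideanSpace ℝ (Fin n)), ‖t₂‖ = 1 ∧ ‖t₂ - t₁‖ ≤ (4 / c) * ‖A - B‖ := by
  classical
  set KA := LinearMap.ker (A : EuclideanSpace ℝ (Fin n) →ₗ[ℝ] EuclideanSpace ℝ (Fin n)) with hKA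
  set δ := ‖A - B‖ with hδdef
  have hδ0 : 0 ≤ δ := norm_nonneg _
  have hεhalf : δ / c ≤ 1 / 2 := by
    rw [div_le_div_iff₀ hc (by norm_num)]
    linarith
  -- Step 1: every element of ker B is within (δ/c)‖u‖ of its projection to ker A.
  have step : ∀ u ∈ LinearMap.ker (B : EuclideanSpace ℝ (Fin n) →ₗ[ℝ] EuclideanSpace ℝ (Fin n)),
      ‖u - (KA.orthogonalProjectionOnto u : EuclideanSpace ℝ (Fin n))‖ ≤ (δ / c) * ‖u‖ := by
    intro u hu
    set b := u - (KA.orthogonalProjectionOnto u : EuclideanSpace ℝ (Fin n)) with hb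
    have hbmem : b ∈ KAᗮ := Submodule.sub_starProjection_mem_orthogonal (K := KA) u
    have hAb : A b = A u := by
      have : A ((KA.orthogonalProjectionOnto u : EuclideanSpace ℝ (Fin n))) = 0 :=
        (KA.orthogonalProjectionOnto u).2
      rw [hb, map_sub, this, sub_zero]
    have h1 : c * ‖b‖ ≤ ‖A u‖ := by rw [← hAb]; exact hA b hbmem
    have h2 : ‖A u‖ ≤ δ * ‖u‖ := by
      have : A u = (A - B) u := by
        have hBu : B u = 0 := hu
        simp [ContinuousLinearMap.sub_apply, hBu]
      rw [this]
      exact (A - B).le_opNorm u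
    rw [div_mul_eq_mul_div, le_div_iff₀ hc, mul_comm]
    linarith
  -- Step 2: projection from ker B to ker A is injective, hence surjective.
  let φ : LinearMap.ker (B : EuclideanSpace ℝ (Fin n) →ₗ[ℝ] EuclideanSpace ℝ (Fin n)) →ₗ[ℝ] KA :=
    (KA.orthogonalProjectionOnto.toLinearMap).comp (LinearMap.ker (B : EuclideanSpace ℝ (Fin n) →ₗ[ℝ] EuclideanSpace ℝ (Fin n))).subtype
  have hφinj : Function.Injective φ := by
    intro u v huv
    have huv' : (KA.orthogonalProjectionOnto (u : EuclideanSpace ℝ (Fin n)))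
        = KA.orthogonalProjectionOnto (v : EuclideanSpace ℝ (Fin n)) := huv
    have hu := step u u.2
    have hv := step v v.2
    have hmem : ((u - v : LinearMap.ker (B : EuclideanSpace ℝ (Fin n) →ₗ[ℝ] EuclideanSpace ℝ (Fin n))) : EuclideanSpace ℝ (Fin n)) ∈ LinearMap.ker (B : EuclideanSpace ℝ (Fin n) →ₗ[ℝ] EuclideanSpace ℝ (Fin n)) :=
      (u - v).2
    have hproj0 : (KA.orthogonalProjectionOnto ((u - v : LinearMap.ker (B : EuclideanSpace ℝ (Fin n) →ₗ[ℝ] EuclideanSpace ℝ (Fin n))) :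
        EuclideanSpace ℝ (Fin n)) : EuclideanSpace ℝ (Fin n)) = 0 := by
      have : φ (u - v) = 0 := by rw [map_sub, huv, sub_self]
      have h2 : (φ (u - v) : EuclideanSpace ℝ (Fin n)) = 0 := by rw [this]; rfl
      exact h2
    have hw := step _ hmem
    rw [hproj0, sub_zero] at hw
    have : ‖((u - v : LinearMap.ker (B : EuclideanSpace ℝ (Fin n) →ₗ[ℝ] EuclideanSpace ℝ (Fin n))) : EuclideanSpace ℝ (Fin n))‖ = 0 := by
      nlinarith [norm_nonneg ((u - v : LinearMap.ker (B : EuclideanSpace ℝ (Fin n) →ₗ[ℝ] EuclideanSpace ℝ (Fin n))) : EuclideanSpace ℝ (Fin n))]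
    have := norm_eq_zero.mp this
    exact sub_eq_zero.mp (Subtype.ext this)
  have hφsurj : Function.Surjective φ :=
    (LinearMap.injective_iff_surjective_of_finrank_eq_finrank hrk).mp hφinj
  obtain ⟨u, hu⟩ := hφsurj ⟨t₁, ht₁⟩
  set w : EuclideanSpace ℝ (Fin n) := (u : EuclideanSpace ℝ (Fin n)) with hwdef
  have hproj : (KA.orthogonalProjectionOnto w : EuclideanSpace ℝ (Fin n)) = t₁ :=
    congrArg Subtype.val hu
  have h1 : ‖w - t₁‖ ≤ (δ / c) * ‖w‖ := by
    have := step w u.2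
    rwa [hproj] at this
  have hwub : ‖w‖ ≤ 2 := by
    have h2 : ‖w‖ - ‖t₁‖ ≤ ‖w - t₁‖ := norm_sub_norm_le w t₁
    have hεw : (δ / c) * ‖w‖ ≤ (1 / 2) * ‖w‖ :=
      mul_le_mul_of_nonneg_right hεhalf (norm_nonneg w)
    nlinarith
  have hwlb : (1 : ℝ) / 2 ≤ ‖w‖ := by
    have h2 : ‖t₁‖ - ‖w‖ ≤ ‖t₁ - w‖ := norm_sub_norm_le t₁ w
    rw [norm_sub_rev] at h2
    have hεw : (δ / c) * ‖w‖ ≤ (1 / 2) * ‖w‖ :=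
      mul_le_mul_of_nonneg_right hεhalf (norm_nonneg w)
    nlinarith
  have hw0 : ‖w‖ ≠ 0 := by positivity
  refine ⟨‖w‖⁻¹ • w, ?_, ?_, ?_⟩
  · exact (LinearMap.ker (B : EuclideanSpace ℝ (Fin n) →ₗ[ℝ] EuclideanSpace ℝ (Fin n))).smul_mem _ u.2
  · rw [norm_smul, norm_inv, norm_norm, inv_mul_cancel₀ hw0]
  · have hsplit : ‖‖w‖⁻¹ • w - t₁‖ ≤ ‖‖w‖⁻¹ • w - w‖ + ‖w - t₁‖ := by
      have := norm_sub_le_norm_sub_add_norm_sub (‖w‖⁻¹ • w) w t₁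
      linarith [norm_sub_le (‖w‖⁻¹ • w - w) (w - t₁),
        congrArg norm (sub_add_sub_cancel (‖w‖⁻¹ • w) w t₁)]
    have hstep1 : ‖‖w‖⁻¹ • w - w‖ = |1 - ‖w‖| := by
      have : ‖w‖⁻¹ • w - w = (‖w‖⁻¹ - 1) • w := by rw [sub_smul, one_smul]
      have ha : 0 < ‖w‖ := lt_of_le_of_ne (norm_nonneg w) (Ne.symm hw0)
      have key : (‖w‖⁻¹ - 1) * ‖w‖ = 1 - ‖w‖ := by field_simp
      have habs : |‖w‖⁻¹ - 1| * ‖w‖ = |(‖w‖⁻¹ - 1) * ‖w‖| := by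
        rw [abs_mul, abs_of_pos ha]
      rw [this, norm_smul, Real.norm_eq_abs, habs, key]
    have hstep2 : |1 - ‖w‖| ≤ ‖w - t₁‖ := by
      have := abs_norm_sub_norm_le t₁ w
      rw [ht₁n, norm_sub_rev] at this
      exact this
    have hfinal : ‖‖w‖⁻¹ • w - t₁‖ ≤ 2 * ((δ / c) * ‖w‖) := by
      rw [hstep1] at hsplit
      linarith
    have : 2 * ((δ / c) * ‖w‖) ≤ (4 / c) * δ := by
      have he : (4 / c) * δ = 4 * (δ / c) := by ring
      rw [he]
      nlinarith [div_nonneg hδ0 hc.le]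
    linarith

theorem statement2
    (n s : ℕ) (hs0 : 0 < s) (hsn : s < n)
    (f : EuclideanSpace ℝ (Fin n) → EuclideanSpace ℝ (Fin n))
    (hf : ContDiff ℝ 2 f)
    (M : Set (EuclideanSpace ℝ (Fin n))) (hMdef : M = {x | f x = 0})
    (hMne : M.Nonempty)
    (G : Set (EuclideanSpace ℝ (Fin n))) (hG : IsOpen G) (hMG : M ⊆ G)
    (hker : ∀ x ∈ G, Module.finrank ℝ (LinearMap.ker (fderiv ℝ f x : EuclideanSpace ℝ (Fin n) →ₗ[ℝ] EuclideanSpace ℝ (Fin n))) = s) :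
    ∀ p ∈ M, ∃ V : Set (EuclideanSpace ℝ (Fin n)), V ⊆ M ∧ p ∈ V ∧
      (∃ O : Set (EuclideanSpace ℝ (Fin n)), IsOpen O ∧ V = M ∩ O) ∧
      ∃ L : ℝ, 0 < L ∧ ∀ q ∈ V,
        sSup {d : ℝ | ∃ t₁ ∈ LinearMap.ker (fderiv ℝ f p : EuclideanSpace ℝ (Fin n) →ₗ[ℝ] EuclideanSpace ℝ (Fin n)), ‖t₁‖ = 1 ∧
            d = sInf {r : ℝ | ∃ t₂ ∈ LinearMap.ker (fderiv ℝ f q : EuclideanSpace ℝ (Fin n) →ₗ[ℝ] EuclideanSpace ℝ (Fin n)), ‖t₂‖ = 1 ∧ r = ‖t₂ - t₁‖}}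
          ≤ L * ‖p - q‖ := by
  intro p hpM
  have hpG : p ∈ G := hMG hpM
  -- the derivative at p is bounded below on the orthogonal complement of its kernel
  set Ap := fderiv ℝ f p with hApdef
  let T : ((LinearMap.ker (Ap : EuclideanSpace ℝ (Fin n) →ₗ[ℝ] EuclideanSpace ℝ (Fin n)))ᗮ →ₗ[ℝ] EuclideanSpace ℝ (Fin n)) :=
    (Ap : EuclideanSpace ℝ (Fin n) →ₗ[ℝ] EuclideanSpace ℝ (Fin n)).comp
      (LinearMap.ker (Ap : EuclideanSpace ℝ (Fin n) →ₗ[ℝ] EuclideanSpace ℝ (Fin n)))ᗮ.subtype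
  have hTker : LinearMap.ker T = ⊥ := by
    rw [LinearMap.ker_eq_bot']
    intro x hx
    have hx' : (x : EuclideanSpace ℝ (Fin n)) ∈ LinearMap.ker (Ap : EuclideanSpace ℝ (Fin n) →ₗ[ℝ] EuclideanSpace ℝ (Fin n)) := by
      simpa [T] using hx
    have hx0 : (x : EuclideanSpace ℝ (Fin n)) = 0 :=
      (Submodule.disjoint_def.mp (Submodule.orthogonal_disjoint (LinearMap.ker (Ap : EuclideanSpace ℝ (Fin n) →ₗ[ℝ] EuclideanSpace ℝ (Fin n))))) _ hx' x.2
    exact Subtype.ext hx0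
  obtain ⟨K, hK0, hKanti⟩ := T.exists_antilipschitzWith hTker
  have hKR : (0 : ℝ) < (K : ℝ) := hK0
  set c : ℝ := (K : ℝ)⁻¹ with hcdef
  have hc : 0 < c := by positivity
  have hA : ∀ v ∈ (LinearMap.ker (Ap : EuclideanSpace ℝ (Fin n) →ₗ[ℝ] EuclideanSpace ℝ (Fin n)))ᗮ, c * ‖v‖ ≤ ‖Ap v‖ := by
    intro v hv
    have h := hKanti.le_mul_dist (⟨v, hv⟩ : (LinearMap.ker (Ap : EuclideanSpace ℝ (Fin n) →ₗ[ℝ] EuclideanSpace ℝ (Fin n)))ᗮ) 0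
    rw [map_zero, dist_zero_right, dist_zero_right] at h
    have hTv : T ⟨v, hv⟩ = Ap v := rfl
    have hnorm : ‖(⟨v, hv⟩ : (LinearMap.ker (Ap : EuclideanSpace ℝ (Fin n) →ₗ[ℝ] EuclideanSpace ℝ (Fin n)))ᗮ)‖ = ‖v‖ := rfl
    rw [hTv, hnorm] at h
    have h2 := mul_le_mul_of_nonneg_left h (le_of_lt (inv_pos.mpr hKR))
    rw [← mul_assoc, inv_mul_cancel₀ (ne_of_gt hKR), one_mul] at h2
    exact h2
  -- the derivative map is Lipschitz near p
  have hC1 : ContDiffAt ℝ 1 (fderiv ℝ f) p :=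
    (hf.fderiv_right (m := 1) (by norm_num)).contDiffAt
  obtain ⟨ℓ, t, ht, hlip⟩ := hC1.exists_lipschitzOnWith
  have htG : t ∩ G ∈ nhds p := Filter.inter_mem ht (hG.mem_nhds hpG)
  obtain ⟨r₀, hr₀, hball⟩ := Metric.mem_nhds_iff.mp htG
  set r : ℝ := min r₀ (c / (2 * ((ℓ : ℝ) + 1))) with hrdef
  have hr : 0 < r := lt_min hr₀ (by positivity)
  refine ⟨M ∩ Metric.ball p r, inter_subset_left, ⟨hpM, Metric.mem_ball_self hr⟩,
    ⟨Metric.ball p r, Metric.isOpen_ball, rfl⟩, 4 * ((ℓ : ℝ) + 1) / c, by positivity, ?_⟩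
  intro q hq
  obtain ⟨hqM, hqball⟩ := hq
  have hqt : q ∈ t ∩ G := by
    apply hball
    rw [Metric.mem_ball] at hqball ⊢
    exact lt_of_lt_of_le hqball (min_le_left _ _)
  have hpt : p ∈ t ∩ G := hball (Metric.mem_ball_self hr₀)
  have hqG : q ∈ G := hqt.2
  set Aq := fderiv ℝ f q with hAqdef
  -- Lipschitz estimate on the derivative
  have hdist : ‖Ap - Aq‖ ≤ (ℓ : ℝ) * ‖p - q‖ := by
    have h := hlip.dist_le_mul p hpt.1 q hqt.1
    rwa [dist_eq_norm, dist_eq_norm] at h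
  have hpq : ‖p - q‖ ≤ c / (2 * ((ℓ : ℝ) + 1)) := by
    have : dist q p < r := hqball
    rw [dist_comm, dist_eq_norm] at this
    have hmin := min_le_right r₀ (c / (2 * ((ℓ : ℝ) + 1)))
    exact le_of_lt (lt_of_lt_of_le this (min_le_right _ _))
  have hδc : ‖Ap - Aq‖ ≤ c / 2 := by
    have hl1 : (0 : ℝ) ≤ (ℓ : ℝ) := ℓ.coe_nonneg
    have h2 : (ℓ : ℝ) * ‖p - q‖ ≤ ((ℓ : ℝ) + 1) * (c / (2 * ((ℓ : ℝ) + 1))) := by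
      apply mul_le_mul (by linarith) hpq (norm_nonneg _) (by linarith)
    have h3 : ((ℓ : ℝ) + 1) * (c / (2 * ((ℓ : ℝ) + 1))) = c / 2 := by
      field_simp
    linarith
  have hrk : Module.finrank ℝ (LinearMap.ker (Aq : EuclideanSpace ℝ (Fin n) →ₗ[ℝ] EuclideanSpace ℝ (Fin n))) = Module.finrank ℝ (LinearMap.ker (Ap : EuclideanSpace ℝ (Fin n) →ₗ[ℝ] EuclideanSpace ℝ (Fin n))) := by
    rw [← hApdef, ← hAqdef] at *
    rw [hker q hqG, hker p hpG]
  -- bound the Hausdorff distance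
  apply Real.sSup_le
  · rintro d ⟨t₁, ht₁, ht₁n, rfl⟩
    obtain ⟨t₂, ht₂, ht₂n, hte⟩ := key_lemma Ap Aq hrk c hc hA hδc t₁ ht₁ ht₁n
    have hbdd : BddBelow {r : ℝ | ∃ t₂ ∈ LinearMap.ker (fderiv ℝ f q : EuclideanSpace ℝ (Fin n) →ₗ[ℝ] EuclideanSpace ℝ (Fin n)), ‖t₂‖ = 1 ∧
        r = ‖t₂ - t₁‖} := by
      refine ⟨0, ?_⟩
      rintro x ⟨t', _, _, rfl⟩
      positivity
    have hmem : ‖t₂ - t₁‖ ∈ {r : ℝ | ∃ t₂ ∈ LinearMap.ker (fderiv ℝ f q : EuclideanSpace ℝ (Fin n) →ₗ[ℝ] EuclideanSpace ℝ (Fin n)), ‖t₂‖ = 1 ∧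
        r = ‖t₂ - t₁‖} := ⟨t₂, ht₂, ht₂n, rfl⟩
    have h1 := csInf_le hbdd hmem
    have h2 : (4 / c) * ‖Ap - Aq‖ ≤ 4 * ((ℓ : ℝ) + 1) / c * ‖p - q‖ := by
      have hl1 : (0 : ℝ) ≤ (ℓ : ℝ) := ℓ.coe_nonneg
      have := mul_le_mul_of_nonneg_left hdist (le_of_lt (by positivity : (0:ℝ) < 4 / c))
      have heq : 4 / c * ((ℓ : ℝ) * ‖p - q‖) ≤ 4 * ((ℓ : ℝ) + 1) / c * ‖p - q‖ := by
        rw [div_mul_eq_mul_div, div_mul_eq_mul_div, div_le_div_iff₀ hc hc]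
        nlinarith [norm_nonneg (p - q), mul_pos hc hc]
      linarith
    linarith
  · positivity
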